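/- The entropy gap between the moment-matched Gaussian P and the Gaussian mixture Q satisfies H(P) − H(Q) ≥ −(1/4) E_{(i,j)∼w×w}[ (μ_i − μ_j)² (σ_i² + σ_j²) / (σ_i² σ_j²) ], i.e., H(Q) ≤ H(P) + (1/4) Σ_{i,j} w_i w_j (μ_i − μ_j)²(σ_i² + σ_j²)/(σ_i² σ_j²). -/

import Mathlib

open Finset MeasureTheory Real Set

noncomputable def gpdf (m s2 x : ℝ) : ℝ :=
  (Real.sqrt (2 * Real.pi * s2))⁻¹ * Real.exp (-((x - m) ^ 2) / (2 * s2))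

lemma gpdf_eq_pdfReal (m : ℝ) {s2 : ℝ} (hs2 : 0 < s2) (x : ℝ) :
    gpdf m s2 x = ProbabilityTheory.gaussianPDFReal m ⟨s2, hs2.le⟩ x := by
  simp [gpdf, ProbabilityTheory.gaussianPDFReal]
  rfl

lemma gpdf_pos (m : ℝ) {s2 : ℝ} (hs2 : 0 < s2) (x : ℝ) : 0 < gpdf m s2 x := by
  apply mul_pos (inv_pos.2 (Real.sqrt_pos.2 (by positivity))) (Real.exp_pos _)

lemma gpdf_le (m : ℝ) {s2 : ℝ} (hs2 : 0 < s2) (x : ℝ) :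
    gpdf m s2 x ≤ (Real.sqrt (2 * Real.pi * s2))⁻¹ := by
  have h1 : Real.exp (-((x - m) ^ 2) / (2 * s2)) ≤ 1 := by
    rw [Real.exp_le_one_iff]
    exact div_nonpos_of_nonpos_of_nonneg (neg_nonpos.2 (by positivity)) (by positivity)
  rw [gpdf]
  nth_rewrite 2 [← mul_one ((Real.sqrt (2 * Real.pi * s2))⁻¹)]
  exact mul_le_mul_of_nonneg_left h1 (by positivity)

lemma continuous_gpdf (m s2 : ℝ) : Continuous (gpdf m s2) := by
  unfold gpdf; fun_prop

lemma integrable_gpdf (m : ℝ) {s2 : ℝ} (hs2 : 0 < s2) :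
    Integrable (fun x => gpdf m s2 x) := by
  simp only [gpdf_eq_pdfReal m hs2]
  exact ProbabilityTheory.integrable_gaussianPDFReal m ⟨s2, hs2.le⟩

lemma integral_gpdf (m : ℝ) {s2 : ℝ} (hs2 : 0 < s2) :
    ∫ x, gpdf m s2 x = 1 := by
  simp only [gpdf_eq_pdfReal m hs2]
  exact ProbabilityTheory.integral_gaussianPDFReal_eq_one m
    (by simp [← NNReal.coe_inj, hs2.ne'] : (⟨s2, hs2.le⟩ : NNReal) ≠ 0)

lemma log_gpdf (m : ℝ) {s2 : ℝ} (hs2 : 0 < s2) (x : ℝ) :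
    Real.log (gpdf m s2 x)
      = -Real.log (Real.sqrt (2 * Real.pi * s2)) + -((x - m) ^ 2) / (2 * s2) := by
  rw [gpdf, Real.log_mul (by positivity) (Real.exp_pos _).ne', Real.log_inv, Real.log_exp]

lemma integrable_sq_mul_exp {b : ℝ} (hb : 0 < b) :
    Integrable fun x : ℝ => x ^ 2 * Real.exp (-b * x ^ 2) := by
  have h := integrable_rpow_mul_exp_neg_mul_sq hb (s := 2) (by norm_num)
  refine h.congr ?_
  filter_upwards with x
  rw [← Real.rpow_natCast x 2]; norm_num

lemma integral_sq_mul_exp {b : ℝ} (hb : 0 < b) :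
    ∫ x : ℝ, x ^ 2 * Real.exp (-b * x ^ 2)
      = Real.sqrt Real.pi * b ^ (-(3:ℝ)/2) / 2 := by
  have hIoi : ∫ x in Ioi (0:ℝ), x ^ 2 * Real.exp (-b * x ^ 2)
      = b ^ (-(3:ℝ)/2) * (1/2) * Real.Gamma (3/2) := by
    have h := integral_rpow_mul_exp_neg_mul_rpow (p := 2) (q := 2) two_pos (by norm_num) hb
    rw [show ((2:ℝ)+1)/2 = (3:ℝ)/2 by norm_num, show (-((2:ℝ)+1)/2) = -(3:ℝ)/2 by norm_num] at h
    rw [← h]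
    refine setIntegral_congr_fun measurableSet_Ioi fun x hx => ?_
    rw [← Real.rpow_natCast x 2]; norm_num
  have hG : Real.Gamma ((3:ℝ)/2) = Real.sqrt Real.pi / 2 := by
    rw [show (3:ℝ)/2 = 1/2 + 1 by norm_num, Real.Gamma_add_one (by norm_num),
      Real.Gamma_one_half_eq]
    ring
  have habs : ∫ x : ℝ, x ^ 2 * Real.exp (-b * x ^ 2)
      = 2 * ∫ x in Ioi (0:ℝ), x ^ 2 * Real.exp (-b * x ^ 2) := by
    rw [← integral_comp_abs (f := fun x => x ^ 2 * Real.exp (-b * x ^ 2))]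
    congr 1; funext x; rw [sq_abs]
  rw [habs, hIoi, hG]; ring

lemma integral_id_mul_exp {b : ℝ} (hb : 0 < b) :
    ∫ x : ℝ, x * Real.exp (-b * x ^ 2) = 0 := by
  set f : ℝ → ℝ := fun x => x * Real.exp (-b * x ^ 2) with hf
  have h := integral_neg_eq_self f (volume : Measure ℝ)
  have h2 : ∀ x, f (-x) = -f x := by intro x; simp only [hf, neg_sq]; ring
  simp_rw [h2, integral_neg] at h
  linarith

lemma gpdf_zero_eq {s2 : ℝ} (hs2 : 0 < s2) (y : ℝ) :
    gpdf 0 s2 y = (Real.sqrt (2 * Real.pi * s2))⁻¹ * Real.exp (-(2 * s2)⁻¹ * y ^ 2) := by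
  rw [gpdf]
  congr 1
  rw [sub_zero]
  field_simp

lemma integrable_gpdf_zero_mul_sq {s2 : ℝ} (hs2 : 0 < s2) :
    Integrable fun y : ℝ => gpdf 0 s2 y * y ^ 2 := by
  have h := (integrable_sq_mul_exp (b := (2 * s2)⁻¹) (by positivity)).const_mul
    (Real.sqrt (2 * Real.pi * s2))⁻¹
  refine h.congr ?_
  filter_upwards with y
  rw [gpdf_zero_eq hs2]
  ring

lemma integral_gpdf_zero_mul_sq {s2 : ℝ} (hs2 : 0 < s2) :
    ∫ y : ℝ, gpdf 0 s2 y * y ^ 2 = s2 := by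
  have h1 : ∀ y : ℝ, gpdf 0 s2 y * y ^ 2
      = (Real.sqrt (2 * Real.pi * s2))⁻¹ * (y ^ 2 * Real.exp (-(2 * s2)⁻¹ * y ^ 2)) := by
    intro y; rw [gpdf_zero_eq hs2]; ring
  simp_rw [h1]
  rw [integral_const_mul, integral_sq_mul_exp (by positivity)]
  -- now pure algebra
  have h2s2 : (0:ℝ) < 2 * s2 := by positivity
  have hb : ((2 * s2)⁻¹ : ℝ) ^ (-(3:ℝ)/2) = (2 * s2) ^ ((3:ℝ)/2) := by
    rw [← Real.rpow_neg_one (2 * s2), ← Real.rpow_mul h2s2.le]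
    norm_num
  have h32 : (2 * s2) ^ ((3:ℝ)/2) = (2 * s2) * Real.sqrt (2 * s2) := by
    rw [show (3:ℝ)/2 = 1 + 1/2 by norm_num, Real.rpow_add h2s2, Real.rpow_one,
      Real.sqrt_eq_rpow]
  have hsq : Real.sqrt (2 * Real.pi * s2) = Real.sqrt Real.pi * Real.sqrt (2 * s2) := by
    rw [show 2 * Real.pi * s2 = Real.pi * (2 * s2) by ring,
      Real.sqrt_mul Real.pi_pos.le]
  rw [hb, h32, hsq]
  have hpi : Real.sqrt Real.pi ≠ 0 := by positivity
  have hs : Real.sqrt (2 * s2) ≠ 0 := by positivity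
  field_simp

lemma integrable_gpdf_zero_mul_id {s2 : ℝ} (hs2 : 0 < s2) :
    Integrable fun y : ℝ => gpdf 0 s2 y * y := by
  have h := (integrable_mul_exp_neg_mul_sq (b := (2 * s2)⁻¹) (by positivity)).const_mul
    (Real.sqrt (2 * Real.pi * s2))⁻¹
  refine h.congr ?_
  filter_upwards with y
  rw [gpdf_zero_eq hs2]
  ring

lemma integral_gpdf_zero_mul_id {s2 : ℝ} (hs2 : 0 < s2) :
    ∫ y : ℝ, gpdf 0 s2 y * y = 0 := by
  have h1 : ∀ y : ℝ, gpdf 0 s2 y * y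
      = (Real.sqrt (2 * Real.pi * s2))⁻¹ * (y * Real.exp (-(2 * s2)⁻¹ * y ^ 2)) := by
    intro y; rw [gpdf_zero_eq hs2]; ring
  simp_rw [h1]
  rw [integral_const_mul, integral_id_mul_exp (by positivity), mul_zero]

lemma gpdf_shift (m s2 x : ℝ) : gpdf m s2 x = gpdf 0 s2 (x - m) := by simp [gpdf]

lemma integrable_gpdf_zero_mul_affine_sq (d : ℝ) {s2 : ℝ} (hs2 : 0 < s2) :
    Integrable fun y : ℝ => gpdf 0 s2 y * (y + d) ^ 2 := by
  have h := ((integrable_gpdf_zero_mul_sq hs2).add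
    ((integrable_gpdf_zero_mul_id hs2).const_mul (2 * d))).add
    ((integrable_gpdf (0:ℝ) hs2).const_mul (d ^ 2))
  refine h.congr ?_
  filter_upwards with y
  simp only [Pi.add_apply]
  ring

lemma integral_gpdf_zero_mul_affine_sq (d : ℝ) {s2 : ℝ} (hs2 : 0 < s2) :
    ∫ y : ℝ, gpdf 0 s2 y * (y + d) ^ 2 = s2 + d ^ 2 := by
  have expand : (fun y : ℝ => gpdf 0 s2 y * (y + d) ^ 2)
      = fun y : ℝ => (gpdf 0 s2 y * y ^ 2 + 2 * d * (gpdf 0 s2 y * y))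
          + d ^ 2 * gpdf 0 s2 y := by
    funext y; ring
  have h1 : Integrable fun y : ℝ => gpdf 0 s2 y * y ^ 2 + 2 * d * (gpdf 0 s2 y * y) :=
    (integrable_gpdf_zero_mul_sq hs2).add
      ((integrable_gpdf_zero_mul_id hs2).const_mul (2 * d))
  have h2 : Integrable fun y : ℝ => d ^ 2 * gpdf 0 s2 y :=
    (integrable_gpdf (0:ℝ) hs2).const_mul (d ^ 2)
  rw [expand, integral_add h1 h2,
    integral_add (integrable_gpdf_zero_mul_sq hs2)
      ((integrable_gpdf_zero_mul_id hs2).const_mul (2 * d)),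
    integral_const_mul, integral_const_mul, integral_gpdf_zero_mul_sq hs2,
    integral_gpdf_zero_mul_id hs2, integral_gpdf (0:ℝ) hs2]
  ring

lemma integrable_gpdf_mul_sq (m c : ℝ) {s2 : ℝ} (hs2 : 0 < s2) :
    Integrable fun x : ℝ => gpdf m s2 x * (x - c) ^ 2 := by
  have h := (integrable_gpdf_zero_mul_affine_sq (m - c) hs2).comp_sub_right m
  refine h.congr ?_
  filter_upwards with x
  rw [gpdf_shift m s2 x]
  ring_nf

lemma integral_gpdf_mul_sq (m c : ℝ) {s2 : ℝ} (hs2 : 0 < s2) :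
    ∫ x : ℝ, gpdf m s2 x * (x - c) ^ 2 = s2 + (m - c) ^ 2 := by
  rw [← integral_gpdf_zero_mul_affine_sq (m - c) hs2,
    ← integral_sub_right_eq_self (fun y : ℝ => gpdf 0 s2 y * (y + (m - c)) ^ 2) m]
  congr 1
  funext x
  rw [gpdf_shift m s2 x]
  ring_nf

lemma integrable_gpdf_mul_linquad (m c A : ℝ) {s2 t : ℝ} (hs2 : 0 < s2) (ht : 0 < t) :
    Integrable fun x : ℝ => gpdf m s2 x * (-A + -((x - c) ^ 2) / (2 * t)) := by
  have h := ((integrable_gpdf m hs2).const_mul (-A)).add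
    ((integrable_gpdf_mul_sq m c hs2).const_mul (-(2 * t)⁻¹))
  refine h.congr ?_
  filter_upwards with x
  simp only [Pi.add_apply]
  have h2t : (2 * t) ≠ 0 := by positivity
  field_simp

lemma integral_gpdf_mul_linquad (m c A : ℝ) {s2 t : ℝ} (hs2 : 0 < s2) (ht : 0 < t) :
    ∫ x : ℝ, gpdf m s2 x * (-A + -((x - c) ^ 2) / (2 * t))
      = -A - (s2 + (m - c) ^ 2) / (2 * t) := by
  have expand : (fun x : ℝ => gpdf m s2 x * (-A + -((x - c) ^ 2) / (2 * t)))
      = fun x : ℝ => -A * gpdf m s2 x + -(2 * t)⁻¹ * (gpdf m s2 x * (x - c) ^ 2) := by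
    funext x
    have h2t : (2 * t) ≠ 0 := by positivity
    field_simp
  rw [expand, integral_add ((integrable_gpdf m hs2).const_mul (-A))
      ((integrable_gpdf_mul_sq m c hs2).const_mul (-(2 * t)⁻¹)),
    integral_const_mul, integral_const_mul, integral_gpdf m hs2, integral_gpdf_mul_sq m c hs2]
  have h2t : (2 * t) ≠ 0 := by positivity
  field_simp
  ring

/-- Entropy upper bound: H(Q) ≤ H(P) + (1/4)Σ_{i,j} w_i w_j (μ_i−μ_j)²(σ_i²+σ_j²)/(σ_i²σ_j²),
where P is the Gaussian moment-matched to the mixture Q. -/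
theorem gmm_entropy_upper_bound {C : ℕ} (w μ σ2 : Fin C → ℝ)
    (hw : ∀ i, 0 ≤ w i) (hσ : ∀ i, 0 < σ2 i) (hsum : ∑ i, w i = 1) :
    let gauss : ℝ → ℝ → ℝ → ℝ := fun m s2 x =>
      (Real.sqrt (2 * Real.pi * s2))⁻¹ * Real.exp (-((x - m) ^ 2) / (2 * s2))
    let Q : ℝ → ℝ := fun x => ∑ i, w i * gauss (μ i) (σ2 i) x
    let mbar : ℝ := ∑ i, w i * μ i
    let s2bar : ℝ := ∑ i, w i * ((μ i) ^ 2 + σ2 i) - mbar ^ 2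
    let P : ℝ → ℝ := gauss mbar s2bar
    let H : (ℝ → ℝ) → ℝ := fun p => ∫ x, -(p x * Real.log (p x))
    H Q ≤ H P + (1 / 4) * ∑ i, ∑ j, w i * w j *
      ((μ i - μ j) ^ 2 * (σ2 i + σ2 j) / (σ2 i * σ2 j)) := by
  intro gauss Q mbar s2bar P H
  have hQ : ∀ x, Q x = ∑ i, w i * gpdf (μ i) (σ2 i) x := fun _ => rfl
  have hP : ∀ x, P x = gpdf mbar s2bar x := fun _ => rfl
  -- existence of a positive weight
  obtain ⟨i0, hi0⟩ : ∃ i, 0 < w i := by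
    by_contra h
    push_neg at h
    have hz : ∀ i, w i = 0 := fun i => le_antisymm (h i) (hw i)
    rw [Finset.sum_congr rfl (fun i _ => hz i)] at hsum
    simp at hsum
  -- rewrite of s2bar
  have hrw : s2bar = ∑ i, w i * ((μ i - mbar) ^ 2 + σ2 i) := by
    have hterm : ∀ i : Fin C, w i * ((μ i - mbar) ^ 2 + σ2 i)
        = w i * ((μ i) ^ 2 + σ2 i) - 2 * mbar * (w i * μ i) + mbar ^ 2 * w i := fun i => by
      ring
    rw [Finset.sum_congr rfl (fun i _ => hterm i)]
    rw [Finset.sum_add_distrib, Finset.sum_sub_distrib, ← Finset.mul_sum, ← Finset.mul_sum,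
      hsum]
    show s2bar = (∑ i, w i * ((μ i) ^ 2 + σ2 i)) - 2 * mbar * mbar + mbar ^ 2 * 1
    show (∑ i, w i * ((μ i) ^ 2 + σ2 i)) - mbar ^ 2 = _
    ring
  have hs2bar : 0 < s2bar := by
    rw [hrw]
    have hle : w i0 * ((μ i0 - mbar) ^ 2 + σ2 i0)
        ≤ ∑ i, w i * ((μ i - mbar) ^ 2 + σ2 i) := by
      refine Finset.single_le_sum (f := fun i => w i * ((μ i - mbar) ^ 2 + σ2 i))
        (fun i _ => ?_) (Finset.mem_univ i0)
      have := hσ i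
      have := hw i
      positivity
    have hpos : 0 < w i0 * ((μ i0 - mbar) ^ 2 + σ2 i0) := by
      have := hσ i0
      positivity
    linarith
  have hQpos : ∀ x, 0 < Q x := by
    intro x
    rw [hQ]
    refine Finset.sum_pos' (fun i _ => mul_nonneg (hw i) (gpdf_pos (μ i) (hσ i) x).le)
      ⟨i0, Finset.mem_univ i0, mul_pos hi0 (gpdf_pos (μ i0) (hσ i0) x)⟩
  have hPpos : ∀ x, 0 < P x := fun x => by rw [hP]; exact gpdf_pos mbar hs2bar x
  set A : ℝ := Real.log (Real.sqrt (2 * Real.pi * s2bar)) with hA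
  have hlogP : ∀ x, Real.log (P x) = -A + -((x - mbar) ^ 2) / (2 * s2bar) := by
    intro x; rw [hP]; exact log_gpdf mbar hs2bar x
  -- integrability facts
  have intP : Integrable P := integrable_gpdf mbar hs2bar
  have intQ : Integrable Q := by
    refine integrable_finset_sum Finset.univ (fun i _ => ?_)
    exact (integrable_gpdf (μ i) (hσ i)).const_mul (w i)
  have intQone : ∫ x, Q x = 1 := by
    simp_rw [hQ]
    rw [integral_finset_sum Finset.univ
      (fun i _ => (integrable_gpdf (μ i) (hσ i)).const_mul (w i))]
    simp_rw [integral_const_mul]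
    calc ∑ i, w i * ∫ x, gpdf (μ i) (σ2 i) x = ∑ i, w i * 1 :=
          Finset.sum_congr rfl (fun i _ => by rw [integral_gpdf (μ i) (hσ i)])
      _ = 1 := by simp [hsum]
  have intPone : ∫ x, P x = 1 := by
    simp_rw [hP]; exact integral_gpdf mbar hs2bar
  have intPlogP : Integrable fun x => P x * Real.log (P x) := by
    simp_rw [hlogP, hP]
    exact integrable_gpdf_mul_linquad mbar mbar A hs2bar hs2bar
  have crossP : ∫ x, P x * Real.log (P x) = -A - 1 / 2 := by
    simp_rw [hlogP, hP]
    rw [integral_gpdf_mul_linquad mbar mbar A hs2bar hs2bar]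
    have : s2bar ≠ 0 := hs2bar.ne'
    field_simp
    ring
  have hQlogP : ∀ x, Q x * Real.log (P x)
      = ∑ i, w i * (gpdf (μ i) (σ2 i) x * (-A + -((x - mbar) ^ 2) / (2 * s2bar))) := by
    intro x
    rw [hlogP, hQ, Finset.sum_mul]
    exact Finset.sum_congr rfl (fun i _ => by ring)
  have intQlogP : Integrable fun x => Q x * Real.log (P x) := by
    simp_rw [hQlogP]
    refine integrable_finset_sum Finset.univ (fun i _ => ?_)
    exact (integrable_gpdf_mul_linquad (μ i) mbar A (hσ i) hs2bar).const_mul (w i)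
  have crossQ : ∫ x, Q x * Real.log (P x) = -A - 1 / 2 := by
    simp_rw [hQlogP]
    rw [integral_finset_sum Finset.univ (fun i _ =>
      (integrable_gpdf_mul_linquad (μ i) mbar A (hσ i) hs2bar).const_mul (w i))]
    simp_rw [integral_const_mul]
    have hterm : ∀ i : Fin C,
        w i * ∫ x, gpdf (μ i) (σ2 i) x * (-A + -((x - mbar) ^ 2) / (2 * s2bar))
          = -A * w i - (w i * ((μ i - mbar) ^ 2 + σ2 i)) / (2 * s2bar) := by
      intro i
      rw [integral_gpdf_mul_linquad (μ i) mbar A (hσ i) hs2bar]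
      have : s2bar ≠ 0 := hs2bar.ne'
      field_simp
      ring
    rw [Finset.sum_congr rfl (fun i _ => hterm i), Finset.sum_sub_distrib,
      ← Finset.mul_sum, hsum, ← Finset.sum_div, ← hrw]
    have : s2bar ≠ 0 := hs2bar.ne'
    field_simp
  -- Gibbs pointwise inequality
  have hpt : ∀ x, Q x * Real.log (P x) + (Q x - P x) ≤ Q x * Real.log (Q x) := by
    intro x
    have hq := hQpos x
    have hp := hPpos x
    have h1 : Real.log (P x) - Real.log (Q x) ≤ P x / Q x - 1 := by
      rw [← Real.log_div hp.ne' hq.ne']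
      exact Real.log_le_sub_one_of_pos (div_pos hp hq)
    have h2 : Q x * (Real.log (P x) - Real.log (Q x)) ≤ Q x * (P x / Q x - 1) :=
      mul_le_mul_of_nonneg_left h1 hq.le
    have h3 : Q x * (P x / Q x - 1) = P x - Q x := by field_simp
    rw [h3, mul_sub] at h2
    linarith
  -- upper bound for Q log Q
  set M : ℝ := ∑ i, w i * (Real.sqrt (2 * Real.pi * σ2 i))⁻¹ with hM
  have hQM : ∀ x, Q x ≤ M := by
    intro x
    rw [hQ, hM]
    refine Finset.sum_le_sum (fun i _ => ?_)
    exact mul_le_mul_of_nonneg_left (gpdf_le (μ i) (hσ i) x) (hw i)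
  have hupper : ∀ x, Q x * Real.log (Q x) ≤ Q x * Real.log M := by
    intro x
    exact mul_le_mul_of_nonneg_left (Real.log_le_log (hQpos x) (hQM x)) (hQpos x).le
  -- continuity and measurability of Q log Q
  have hQcont : Continuous Q := by
    have : Q = fun x => ∑ i, w i * gpdf (μ i) (σ2 i) x := funext hQ
    rw [this]
    exact continuous_finset_sum _ (fun i _ => continuous_const.mul (continuous_gpdf (μ i) (σ2 i)))
  have hfcont : Continuous fun x => Q x * Real.log (Q x) :=
    hQcont.mul (hQcont.log (fun x => (hQpos x).ne'))
  have intQP : Integrable fun x => Q x - P x := intQ.sub intP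
  have intl : Integrable fun x => Q x * Real.log (P x) + (Q x - P x) :=
    intQlogP.add intQP
  have intu : Integrable fun x => Q x * Real.log M := intQ.mul_const (Real.log M)
  have intf : Integrable fun x => Q x * Real.log (Q x) := by
    refine Integrable.mono' (intl.abs.add intu.abs) hfcont.aestronglyMeasurable ?_
    filter_upwards with x
    rw [Real.norm_eq_abs]
    have h1 := hpt x
    have h2 := hupper x
    have h3 := neg_abs_le (Q x * Real.log (P x) + (Q x - P x))
    have h4 := le_abs_self (Q x * Real.log M)
    have h5 := abs_nonneg (Q x * Real.log (P x) + (Q x - P x))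
    have h6 := abs_nonneg (Q x * Real.log M)
    rw [abs_le]
    constructor <;> simp only [Pi.add_apply] <;> linarith
  -- main comparison
  have key : H Q ≤ A + 1 / 2 := by
    have step : ∫ x, -(Q x * Real.log (Q x))
        ≤ ∫ x, -(Q x * Real.log (P x) + (Q x - P x)) := by
      refine integral_mono intf.neg intl.neg (fun x => ?_)
      exact neg_le_neg (hpt x)
    have hrhs : ∫ x, -(Q x * Real.log (P x) + (Q x - P x)) = A + 1 / 2 := by
      rw [integral_neg, integral_add intQlogP intQP, integral_sub intQ intP,
        crossQ, intQone, intPone]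
      ring
    calc H Q = ∫ x, -(Q x * Real.log (Q x)) := rfl
      _ ≤ _ := step
      _ = A + 1 / 2 := hrhs
  have hHP : H P = A + 1 / 2 := by
    calc H P = ∫ x, -(P x * Real.log (P x)) := rfl
      _ = -∫ x, P x * Real.log (P x) := integral_neg _
      _ = A + 1 / 2 := by rw [crossP]; ring
  have hrem : 0 ≤ (1 / 4 : ℝ) * ∑ i, ∑ j, w i * w j *
      ((μ i - μ j) ^ 2 * (σ2 i + σ2 j) / (σ2 i * σ2 j)) := by
    refine mul_nonneg (by norm_num) ?_
    refine Finset.sum_nonneg (fun i _ => Finset.sum_nonneg (fun j _ => ?_))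
    have hi := hσ i
    have hj := hσ j
    have hwi := hw i
    have hwj := hw j
    positivity
  linarith [key, hHP.symm.le, hrem]
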